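/- Consider, for each dimension l = 1,…,d, a measure μ_l on ℝ with all polynomial moments finite, an orthonormal polynomial family (ψ^{(l)}_n)_{n≥0} for μ_l, and for each level m ≥ 1 a quadrature rule Q^{(l)}_m that is exact of degree 2m − 1 for μ_l (e.g., the m-point Gaussian rule). Let n ≥ d and let A be the Smolyak quadrature built over the isotropic total-order multi-index set K = {k ∈ {1,2,…}^d : Σ_l k_l ≤ n}. Let j and j′ be multi-indices each included in the half-exact set of A, i.e., for each of j and j′ there exists k ∈ K with j_l ≤ k_l − 1 for all l (equivalently Σ_l j_l ≤ n − d, and likewise for j′). Then A integrates the product of the two corresponding basis polynomials exactly: A(Ψ_j Ψ_{j′}) = ∫ Ψ_j Ψ_{j′} d(μ_1 ⊗ ⋯ ⊗ μ_d), which equals 1 if j = j′ and 0 otherwise. (Hence direct quadrature with this Smolyak rule and this basis has no internal aliasing.) -/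

import Mathlib

open MeasureTheory

/-- The integer Smolyak coefficient `c_k = ∑_{z ∈ {0,1}^d, k+z ∈ K} (−1)^{‖z‖₁}`,
with binary multi-indices `z` encoded as subsets `S ⊆ {1,…,d}`. -/
noncomputable def smolyakCoeff {d : ℕ} (K : Finset (Fin d → ℕ)) (k : Fin d → ℕ) : ℤ :=
  ∑ S ∈ (Finset.univ : Finset (Fin d)).powerset,
    if (fun i => k i + if i ∈ S then 1 else 0) ∈ K then (-1 : ℤ) ^ S.card else 0

/-- The tensor quadrature `Q_k = Q^{(1)}_{k 1} ⊗ ⋯ ⊗ Q^{(d)}_{k d}` acting on a function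
`f : ℝ^d → ℝ` by summing over the product node grid with product weights.  Here
`N l m` is the number of points of the level-`m` rule in dimension `l`, with nodes
`x l m` and weights `w l m`. -/
noncomputable def tensorQuad {d : ℕ} (N : Fin d → ℕ → ℕ)
    (x w : ∀ (l : Fin d) (m : ℕ), Fin (N l m) → ℝ)
    (k : Fin d → ℕ) (f : (Fin d → ℝ) → ℝ) : ℝ :=
  ∑ i : ∀ l, Fin (N l (k l)),
    (∏ l, w l (k l) (i l)) * f (fun l => x l (k l) (i l))

/-- The multivariate basis polynomial `Ψ_j(x) = ∏ l, ψ^{(l)}_{j l}(x l)`. -/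
noncomputable def multiPsi {d : ℕ} (ψ : Fin d → ℕ → Polynomial ℝ) (j : Fin d → ℕ) :
    (Fin d → ℝ) → ℝ :=
  fun y => ∏ l, (ψ l (j l)).eval (y l)

lemma tq_factor_aux {d : ℕ} (N : Fin d → ℕ → ℕ) (x w : ∀ (l : Fin d) (m : ℕ), Fin (N l m) → ℝ)
    (k : Fin d → ℕ) (g : Fin d → ℝ → ℝ) :
    tensorQuad N x w k (fun y => ∏ l, g l (y l))
      = ∏ l, ∑ i, w l (k l) i * g l (x l (k l) i) := by
  rw [tensorQuad,
    Finset.prod_univ_sum (t := fun l => (Finset.univ : Finset (Fin (N l (k l)))))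
      (f := fun l i => w l (k l) i * g l (x l (k l) i)), Fintype.piFinset_univ]
  exact Finset.sum_congr rfl fun i _ => (Finset.prod_mul_distrib).symm


open Finset in
lemma smolyak_identity_aux {d n : ℕ} (K : Finset (Fin d → ℕ))
    (hK : ∀ k : Fin d → ℕ, k ∈ K ↔ ((∀ l, 1 ≤ k l) ∧ ∑ l, k l ≤ n))
    (a : Fin d → ℕ → ℝ) (ha0 : ∀ l, a l 0 = 0) :
    ∑ k ∈ K, (smolyakCoeff K k : ℝ) * ∏ l, a l (k l)
      = ∑ k ∈ K, ∏ l, (a l (k l) - a l (k l - 1)) := by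
  have hRHS : ∀ k : Fin d → ℕ,
      ∏ l, (a l (k l) - a l (k l - 1))
        = ∑ S ∈ (univ : Finset (Fin d)).powerset,
            (-1 : ℝ) ^ S.card * ∏ l, a l (k l - if l ∈ S then 1 else 0) := by
    intro k
    have h1 : ∀ l : Fin d, a l (k l) - a l (k l - 1)
        = (-(a l (k l - 1))) + a l (k l) := fun l => by ring
    calc ∏ l, (a l (k l) - a l (k l - 1))
        = ∏ l, ((-(a l (k l - 1))) + a l (k l)) := by simp only [h1]
      _ = ∑ S ∈ (univ : Finset (Fin d)).powerset,
            (∏ l ∈ S, -(a l (k l - 1))) * ∏ l ∈ univ \ S, a l (k l) :=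
        Finset.prod_add _ _ _
      _ = _ := by
        refine Finset.sum_congr rfl fun S hS => ?_
        rw [show ∏ l ∈ S, -(a l (k l - 1)) = (-1:ℝ)^S.card * ∏ l ∈ S, a l (k l - 1) by
          rw [← Finset.prod_const, ← Finset.prod_mul_distrib]
          exact Finset.prod_congr rfl fun l _ => by ring]
        rw [mul_assoc]
        congr 1
        rw [← Finset.prod_sdiff (Finset.subset_univ S), mul_comm]
        congr 1
        · exact Finset.prod_congr rfl fun l hl => by
            rw [if_neg (Finset.mem_sdiff.mp hl).2, Nat.sub_zero]
        · exact Finset.prod_congr rfl fun l hl => by rw [if_pos hl]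
  simp only [hRHS, smolyakCoeff]
  push_cast
  simp only [Finset.sum_mul, Finset.mul_sum]
  rw [Finset.sum_comm, Finset.sum_comm (s := K)]
  refine Finset.sum_congr rfl fun S hS => ?_
  have key : ∑ k ∈ K.filter (fun k => (fun i => k i + if i ∈ S then 1 else 0) ∈ K),
        (-1 : ℝ) ^ S.card * ∏ l, a l (k l)
      = ∑ k ∈ K.filter (fun k => ∀ l ∈ S, 2 ≤ k l),
        (-1 : ℝ) ^ S.card * ∏ l, a l (k l - if l ∈ S then 1 else 0) := by
    refine Finset.sum_nbij' (fun k => fun i => k i + if i ∈ S then 1 else 0)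
      (fun k => fun i => k i - if i ∈ S then 1 else 0) ?_ ?_ ?_ ?_ ?_
    · intro k hk
      obtain ⟨hk1, hk2⟩ := Finset.mem_filter.mp hk
      refine Finset.mem_filter.mpr ⟨hk2, fun l hl => ?_⟩
      have := ((hK k).mp hk1).1 l
      simp only [if_pos hl]; omega
    · intro k hk
      obtain ⟨hk1, hk2⟩ := Finset.mem_filter.mp hk
      obtain ⟨hpos, hsum⟩ := (hK k).mp hk1
      have hmem : (fun i => k i - if i ∈ S then 1 else 0) ∈ K := by
        refine (hK _).mpr ⟨fun l => ?_, ?_⟩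
        · by_cases hl : l ∈ S
          · have := hk2 l hl; simp only [if_pos hl]; omega
          · simp only [if_neg hl]; exact hpos l
        · exact le_trans (Finset.sum_le_sum fun l _ => Nat.sub_le _ _) hsum
      refine Finset.mem_filter.mpr ⟨hmem, ?_⟩
      have he : (fun i => (k i - if i ∈ S then 1 else 0) + if i ∈ S then 1 else 0) = k := by
        funext i
        by_cases hi : i ∈ S
        · have := hk2 i hi; simp only [if_pos hi]; omega
        · simp [hi]
      simpa [he] using hk1
    · intro k hk; funext i; simp
    · intro k hk
      obtain ⟨hk1, hk2⟩ := Finset.mem_filter.mp hk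
      funext i
      by_cases hi : i ∈ S
      · have := hk2 i hi; simp only [if_pos hi]; omega
      · simp [hi]
    · intro k hk
      congr 1
      exact Finset.prod_congr rfl fun l _ => by congr 1; simp
  calc ∑ k ∈ K, (if (fun i => k i + if i ∈ S then 1 else 0) ∈ K then (-1:ℝ)^S.card else 0)
          * ∏ l, a l (k l)
      = ∑ k ∈ K.filter (fun k => (fun i => k i + if i ∈ S then 1 else 0) ∈ K),
          (-1 : ℝ) ^ S.card * ∏ l, a l (k l) := by
        rw [Finset.sum_filter]
        exact Finset.sum_congr rfl fun k _ => by
          by_cases h : (fun i => k i + if i ∈ S then 1 else 0) ∈ K <;> simp [h]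
    _ = ∑ k ∈ K.filter (fun k => ∀ l ∈ S, 2 ≤ k l),
          (-1 : ℝ) ^ S.card * ∏ l, a l (k l - if l ∈ S then 1 else 0) := key
    _ = ∑ k ∈ K, (-1 : ℝ) ^ S.card * ∏ l, a l (k l - if l ∈ S then 1 else 0) := by
        refine Finset.sum_filter_of_ne fun k hk hne l hl => ?_
        by_contra h
        have h1 : k l = 1 := by have := ((hK k).mp hk).1 l; omega
        apply hne
        rw [mul_eq_zero]
        right
        refine Finset.prod_eq_zero (Finset.mem_univ l) ?_
        rw [if_pos hl, h1]
        simpa using ha0 l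

open Finset in
lemma box_sum_aux {d n : ℕ} (K : Finset (Fin d → ℕ))
    (hK : ∀ k : Fin d → ℕ, k ∈ K ↔ ((∀ l, 1 ≤ k l) ∧ ∑ l, k l ≤ n))
    (a : Fin d → ℕ → ℝ) (ha0 : ∀ l, a l 0 = 0)
    (M : Fin d → ℕ) (hM1 : ∀ l, 1 ≤ M l) (hMn : ∑ l, M l ≤ n)
    (hz : ∀ l m, M l < m → a l m = a l (m - 1)) :
    ∑ k ∈ K, ∏ l, (a l (k l) - a l (k l - 1)) = ∏ l, a l (M l) := by
  classical
  set B := Fintype.piFinset (fun l => Finset.Icc 1 (M l)) with hB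
  have hBK : B ⊆ K := by
    intro k hk
    rw [hB, Fintype.mem_piFinset] at hk
    refine (hK k).mpr ⟨fun l => (Finset.mem_Icc.mp (hk l)).1, ?_⟩
    exact le_trans (Finset.sum_le_sum fun l _ => (Finset.mem_Icc.mp (hk l)).2) hMn
  have hvan : ∀ k ∈ K, k ∉ B → ∏ l, (a l (k l) - a l (k l - 1)) = 0 := by
    intro k hk hnb
    rw [hB, Fintype.mem_piFinset] at hnb
    push_neg at hnb
    obtain ⟨l, hl⟩ := hnb
    have h1 := ((hK k).mp hk).1 l
    have h2 : M l < k l := by rw [Finset.mem_Icc] at hl; omega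
    exact Finset.prod_eq_zero (Finset.mem_univ l) (by rw [hz l (k l) h2]; ring)
  rw [← Finset.sum_subset hBK hvan, hB, ← Finset.prod_univ_sum (t := fun l => Finset.Icc 1 (M l)) (f := fun l m => a l m - a l (m - 1))]
  refine Finset.prod_congr rfl fun l _ => ?_
  have htel : ∑ m ∈ Finset.Icc 1 (M l), (a l m - a l (m - 1))
      = ∑ i ∈ Finset.range (M l), (a l (i + 1) - a l i) := by
    refine Finset.sum_nbij' (fun m => m - 1) (fun i => i + 1) ?_ ?_ ?_ ?_ ?_
    · intro m hm; rw [Finset.mem_Icc] at hm; simp only [Finset.mem_range]; omega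
    · intro i hi; rw [Finset.mem_range] at hi; simp only [Finset.mem_Icc]; omega
    · intro m hm; rw [Finset.mem_Icc] at hm; omega
    · intro i _; omega
    · intro m hm; rw [Finset.mem_Icc] at hm; congr 2 <;> omega
  rw [htel, Finset.sum_range_sub (fun i => a l i), ha0 l, sub_zero]


/-- For each dimension `l` let `μ l` be a measure on `ℝ` with all
polynomial moments finite, `ψ l` an orthonormal polynomial family for `μ l`, and
`Q^{(l)}_m` (nodes `x l m`, weights `w l m`) exact of degree `2m − 1` for `μ l`.  Let
`A = ∑_{k ∈ K} c_k Q_k` be the Smolyak quadrature over the isotropic total-order set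
`K = {k ∈ {1,2,…}^d : ∑ k l ≤ n}` with `n ≥ d`.  If `j` and `j'` are each included in
the half-exact set of `A` (there is `k ∈ K` with `j l ≤ k l − 1` for all `l`, and
likewise for `j'`), then `A` integrates `Ψ_j Ψ_{j'}` exactly, and the exact integral is
`1` if `j = j'` and `0` otherwise (no internal aliasing for direct quadrature with this
rule and basis). -/
theorem smolyak_total_order_no_internal_aliasing (d n : ℕ) (hd : 1 ≤ d) (hn : d ≤ n)
    (μ : Fin d → Measure ℝ) [∀ l, SigmaFinite (μ l)]
    (hmom : ∀ l (m : ℕ), Integrable (fun t => t ^ m) (μ l))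
    (ψ : Fin d → ℕ → Polynomial ℝ)
    (hdeg : ∀ l m, (ψ l m).natDegree = m)
    (horth : ∀ l m m',
      ∫ t, (ψ l m).eval t * (ψ l m').eval t ∂(μ l) = if m = m' then 1 else 0)
    (N : Fin d → ℕ → ℕ) (x w : ∀ (l : Fin d) (m : ℕ), Fin (N l m) → ℝ)
    (hexact : ∀ (l : Fin d) (m : ℕ), 1 ≤ m → ∀ p : Polynomial ℝ,
      p.natDegree ≤ 2 * m - 1 →
      ∑ i, w l m i * p.eval (x l m i) = ∫ t, p.eval t ∂(μ l))
    (K : Finset (Fin d → ℕ))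
    (hK : ∀ k : Fin d → ℕ, k ∈ K ↔ ((∀ l, 1 ≤ k l) ∧ ∑ l, k l ≤ n))
    (j j' : Fin d → ℕ)
    (hj : ∃ k ∈ K, ∀ l, j l + 1 ≤ k l)
    (hj' : ∃ k ∈ K, ∀ l, j' l + 1 ≤ k l) :
    (∑ k ∈ K, (smolyakCoeff K k : ℝ) *
        tensorQuad N x w k (fun y => multiPsi ψ j y * multiPsi ψ j' y))
      = ∫ y, multiPsi ψ j y * multiPsi ψ j' y ∂(Measure.pi μ) ∧
    (∫ y, multiPsi ψ j y * multiPsi ψ j' y ∂(Measure.pi μ))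
      = if j = j' then 1 else 0 := by
  classical
  set P : Fin d → Polynomial ℝ := fun l => ψ l (j l) * ψ l (j' l) with hP
  have hPdeg : ∀ l, (P l).natDegree ≤ j l + j' l := fun l =>
    le_trans Polynomial.natDegree_mul_le (by rw [hdeg, hdeg])
  have hI : ∀ l, ∫ t, (P l).eval t ∂(μ l) = if j l = j' l then 1 else 0 := fun l => by
    simpa [hP, Polynomial.eval_mul] using horth l (j l) (j' l)
  have hfun : (fun y : Fin d → ℝ => multiPsi ψ j y * multiPsi ψ j' y)
      = fun y => ∏ l, (P l).eval (y l) := by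
    funext y
    simp [multiPsi, hP, Polynomial.eval_mul, Finset.prod_mul_distrib]
  set a : Fin d → ℕ → ℝ :=
    fun l m => if m = 0 then 0 else ∑ i, w l m i * (P l).eval (x l m i) with ha
  have ha0 : ∀ l, a l 0 = 0 := fun l => by simp [ha]
  obtain ⟨k₀, hk₀K, hk₀⟩ := hj
  obtain ⟨k₁, hk₁K, hk₁⟩ := hj'
  have hsum_aux : ∀ (q : Fin d → ℕ) (kk : Fin d → ℕ), kk ∈ K → (∀ l, q l + 1 ≤ kk l) →
      ∑ l, q l + d ≤ n := by
    intro q kk hkK hq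
    have h1 : ∑ l, q l + d = ∑ l, (q l + 1) := by
      rw [Finset.sum_add_distrib, Finset.sum_const, Finset.card_univ, Fintype.card_fin,
        smul_eq_mul, mul_one]
    have h2 : ∑ l, (q l + 1) ≤ ∑ l, kk l := Finset.sum_le_sum fun l _ => hq l
    have h3 := ((hK kk).mp hkK).2
    omega
  have hsumj : ∑ l, j l + d ≤ n := hsum_aux j k₀ hk₀K hk₀
  have hsumj' : ∑ l, j' l + d ≤ n := hsum_aux j' k₁ hk₁K hk₁
  set M : Fin d → ℕ := fun l => (j l + j' l) / 2 + 1 with hM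
  have hM1 : ∀ l, 1 ≤ M l := fun l => Nat.le_add_left 1 _
  have hMn : ∑ l, M l ≤ n := by
    have h2 : ∀ l : Fin d, 2 * ((j l + j' l) / 2) ≤ j l + j' l := fun l => by omega
    have h3 : 2 * ∑ l, ((j l + j' l) / 2) ≤ ∑ l, (j l + j' l) := by
      rw [Finset.mul_sum]; exact Finset.sum_le_sum fun l _ => h2 l
    have h4 : ∑ l, (j l + j' l) = ∑ l, j l + ∑ l, j' l := Finset.sum_add_distrib
    have h5 : ∑ l, M l = ∑ l, ((j l + j' l) / 2) + d := by
      rw [hM, Finset.sum_add_distrib, Finset.sum_const, Finset.card_univ, Fintype.card_fin,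
        smul_eq_mul, mul_one]
    omega
  have hexa : ∀ l m, 1 ≤ m → j l + j' l ≤ 2 * m - 1 →
      a l m = if j l = j' l then 1 else 0 := by
    intro l m hm hdm
    rw [ha]
    simp only [if_neg (by omega : m ≠ 0)]
    rw [hexact l m hm (P l) (le_trans (hPdeg l) hdm), hI l]
  have hz : ∀ l m, M l < m → a l m = a l (m - 1) := by
    intro l m hlt
    have hMl : M l = (j l + j' l) / 2 + 1 := rfl
    rw [hexa l m (by omega) (by omega), hexa l (m - 1) (by omega) (by omega)]
  have hTQ : ∀ k ∈ K, tensorQuad N x w k (fun y => multiPsi ψ j y * multiPsi ψ j' y)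
      = ∏ l, a l (k l) := by
    intro k hk
    have hk1 := ((hK k).mp hk).1
    rw [hfun, tq_factor_aux N x w k (fun l t => (P l).eval t)]
    refine Finset.prod_congr rfl fun l _ => ?_
    rw [ha]
    simp only [if_neg (by have := hk1 l; omega : k l ≠ 0)]
  have hdelta : ∏ l, (if j l = j' l then (1 : ℝ) else 0) = if j = j' then 1 else 0 := by
    by_cases h : j = j'
    · simp [h]
    · rw [if_neg h]
      obtain ⟨l, hl⟩ := Function.ne_iff.mp h
      exact Finset.prod_eq_zero (Finset.mem_univ l) (if_neg hl)
  have hA : (∑ k ∈ K, (smolyakCoeff K k : ℝ) *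
        tensorQuad N x w k (fun y => multiPsi ψ j y * multiPsi ψ j' y))
      = ∏ l, (if j l = j' l then (1 : ℝ) else 0) := by
    calc ∑ k ∈ K, (smolyakCoeff K k : ℝ) *
          tensorQuad N x w k (fun y => multiPsi ψ j y * multiPsi ψ j' y)
        = ∑ k ∈ K, (smolyakCoeff K k : ℝ) * ∏ l, a l (k l) :=
          Finset.sum_congr rfl fun k hk => by rw [hTQ k hk]
      _ = ∑ k ∈ K, ∏ l, (a l (k l) - a l (k l - 1)) := smolyak_identity_aux K hK a ha0
      _ = ∏ l, a l (M l) := box_sum_aux K hK a ha0 M hM1 hMn hz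
      _ = ∏ l, (if j l = j' l then (1 : ℝ) else 0) :=
          Finset.prod_congr rfl fun l _ => hexa l (M l) (hM1 l) (by
            have : M l = (j l + j' l) / 2 + 1 := rfl
            omega)
  have hInt : (∫ y, multiPsi ψ j y * multiPsi ψ j' y ∂(Measure.pi μ))
      = ∏ l, (if j l = j' l then (1 : ℝ) else 0) := by
    rw [hfun]
    calc ∫ y : Fin d → ℝ, ∏ l, (P l).eval (y l) ∂(Measure.pi μ)
        = ∏ l, ∫ t, (P l).eval t ∂(μ l) :=
          MeasureTheory.integral_fintype_prod_eq_prod (μ := μ)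
            (fun l t => (P l).eval t)
      _ = ∏ l, (if j l = j' l then (1 : ℝ) else 0) :=
          Finset.prod_congr rfl fun l _ => hI l
  exact ⟨by rw [hA, hInt], by rw [hInt, hdelta]⟩
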